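/- arXiv:2108.13628 — 3 statements merged into one kernel-verified Lean document; each statement's English description precedes it below -/
import Mathlib

section
/- Let X, K, Y, potential outcomes Y(k) satisfy consistency Y = Y(K), conditional exchangeability Y(k) ⟂ K | X, and positivity μ(k, x) = P(K = k | X = x) > 0, with X, 𝒦 finite. Let ν̂_k : 𝒳 → ℝ be arbitrary functions. Then for any policy π : 𝒳 → 𝒦, the doubly robust value E[ ν̂_{π(X)}(X) + (Y − ν̂_K(X)) · 1{K = π(X)} / μ(K, X) ] equals E[ Y(π(X)) ], i.e., the DR estimator with the true propensity score is unbiased regardless of the outcome model ν̂. -/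
open Classical in
/-- Probability of an event under a probability mass function on a finite space. -/
noncomputable def Prb {Ω : Type*} [Fintype Ω] (p : Ω → ℝ) (A : Ω → Prop) : ℝ :=
  ∑ ω, if A ω then p ω else 0

/-- Expectation under a probability mass function on a finite space. -/
noncomputable def ExV {Ω : Type*} [Fintype Ω] (p : Ω → ℝ) (f : Ω → ℝ) : ℝ :=
  ∑ ω, p ω * f ω

open Classical in
/-- Conditional expectation of `f` given the event `A`. -/
noncomputable def CExp {Ω : Type*} [Fintype Ω] (p : Ω → ℝ) (f : Ω → ℝ) (A : Ω → Prop) : ℝ :=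
  (∑ ω, if A ω then p ω * f ω else 0) / Prb p A

open Classical in
lemma prb_nonneg' {Ω : Type*} [Fintype Ω] (p : Ω → ℝ) (hp : ∀ ω, 0 ≤ p ω) (A : Ω → Prop) :
    0 ≤ Prb p A := by
  unfold Prb
  apply Finset.sum_nonneg
  intro ω _
  split_ifs <;> simp [hp ω]

open Classical in
lemma sum_t' {Ω : Type*} [Fintype Ω] (p : Ω → ℝ) (f : Ω → ℝ) (Q : Ω → Prop) :
    ∑ t ∈ Finset.image f Finset.univ, t * Prb p (fun ω => f ω = t ∧ Q ω)
      = ∑ ω, if Q ω then p ω * f ω else 0 := by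
  simp only [Prb, Finset.mul_sum]
  rw [Finset.sum_comm]
  apply Finset.sum_congr rfl
  intro ω _
  by_cases hQ : Q ω
  · simp only [hQ, and_true, if_pos hQ, mul_ite, mul_zero]
    rw [Finset.sum_ite_eq]
    simp [mul_comm]
  · rw [if_neg hQ]
    apply Finset.sum_eq_zero
    intro t _
    simp [hQ]

open Classical in
/-- Doubly robust identity with the true propensity score: for any outcome model `ν̂`,
`E[ν̂_{π(X)}(X) + (Y − ν̂_K(X)) 𝟙{K = π(X)} / μ(K, X)] = E[Y(π(X))]`. -/
theorem doubly_robust_true_propensity {Ω 𝒳 𝒦 : Type*} [Fintype Ω] [Fintype 𝒳] [Fintype 𝒦]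
    (p : Ω → ℝ) (hp : ∀ ω, 0 ≤ p ω) (hp1 : ∑ ω, p ω = 1)
    (X : Ω → 𝒳) (K : Ω → 𝒦) (Ypot : 𝒦 → Ω → ℝ) (Y : Ω → ℝ)
    (hcons : ∀ ω, Y ω = Ypot (K ω) ω)
    (hexch : ∀ (k k' : 𝒦) (x : 𝒳) (t : ℝ),
      Prb p (fun ω => Ypot k ω = t ∧ K ω = k' ∧ X ω = x) * Prb p (fun ω => X ω = x)
        = Prb p (fun ω => Ypot k ω = t ∧ X ω = x) * Prb p (fun ω => K ω = k' ∧ X ω = x))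
    (hpos : ∀ (k : 𝒦) (x : 𝒳), 0 < Prb p (fun ω => X ω = x) →
      0 < Prb p (fun ω => K ω = k ∧ X ω = x))
    (μ : 𝒦 → 𝒳 → ℝ)
    (hμ : ∀ (k : 𝒦) (x : 𝒳),
      μ k x * Prb p (fun ω => X ω = x) = Prb p (fun ω => K ω = k ∧ X ω = x))
    (νhat : 𝒦 → 𝒳 → ℝ) (π : 𝒳 → 𝒦) :
    ExV p (fun ω => νhat (π (X ω)) (X ω)
        + (Y ω - νhat (K ω) (X ω)) * (if K ω = π (X ω) then (1:ℝ) else 0) / μ (K ω) (X ω))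
      = ExV p (fun ω => Ypot (π (X ω)) ω) := by
  classical
  have swap : ∀ f : Ω → ℝ, ∑ ω, f ω = ∑ x, ∑ ω, if X ω = x then f ω else 0 := by
    intro f
    rw [Finset.sum_comm]
    apply Finset.sum_congr rfl
    intro ω _
    rw [Finset.sum_ite_eq]
    simp
  have key : ∀ x : 𝒳,
      (∑ ω, if X ω = x then
          p ω * (νhat (π x) x
            + (Y ω - νhat (K ω) x) * (if K ω = π x then (1:ℝ) else 0) / μ (K ω) x) else 0)
        = ∑ ω, if X ω = x then p ω * Ypot (π x) ω else 0 := by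
    intro x
    by_cases hA : Prb p (fun ω => X ω = x) = 0
    · have hz : ∀ ω, X ω = x → p ω = 0 := by
        intro ω hω
        have h := (Finset.sum_eq_zero_iff_of_nonneg (by
          intro ω' _
          split_ifs <;> simp [hp ω'])).mp hA ω (Finset.mem_univ ω)
        simpa [hω] using h
      rw [Finset.sum_eq_zero, Finset.sum_eq_zero]
      · intro ω _
        by_cases h : X ω = x
        · simp [hz ω h]
        · simp [h]
      · intro ω _
        by_cases h : X ω = x
        · simp [hz ω h]
        · simp [h]
    · set A := Prb p (fun ω => X ω = x) with hAdef
      have hApos : 0 < A := (prb_nonneg' p hp _).lt_of_ne' hA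
      have hBpos : 0 < Prb p (fun ω => K ω = π x ∧ X ω = x) := hpos (π x) x hApos
      set B := Prb p (fun ω => K ω = π x ∧ X ω = x) with hBdef
      have hμB : μ (π x) x * A = B := hμ (π x) x
      have hμpos : 0 < μ (π x) x := by nlinarith
      set S := ∑ ω, if K ω = π x ∧ X ω = x then p ω * Ypot (π x) ω else 0 with hSdef
      set T := ∑ ω, if X ω = x then p ω * Ypot (π x) ω else 0 with hTdef
      have hSA : S * A = T * B := by
        have hS' : S = ∑ t ∈ Finset.image (Ypot (π x)) Finset.univ,
            t * Prb p (fun ω => Ypot (π x) ω = t ∧ K ω = π x ∧ X ω = x) := by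
          rw [hSdef]
          refine Eq.trans ?_ (sum_t' p (Ypot (π x)) (fun ω => K ω = π x ∧ X ω = x)).symm
          apply Finset.sum_congr rfl
          intro ω _
          by_cases h : K ω = π x ∧ X ω = x <;> simp [h]
        have hT' : T = ∑ t ∈ Finset.image (Ypot (π x)) Finset.univ,
            t * Prb p (fun ω => Ypot (π x) ω = t ∧ X ω = x) := by
          rw [hTdef]
          refine Eq.trans ?_ (sum_t' p (Ypot (π x)) (fun ω => X ω = x)).symm
          apply Finset.sum_congr rfl
          intro ω _
          by_cases h : X ω = x <;> simp [h]
        rw [hS', hT', Finset.sum_mul, Finset.sum_mul]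
        apply Finset.sum_congr rfl
        intro t _
        linear_combination t * hexch (π x) (π x) x t
      have hST : S = T * μ (π x) x := by
        apply mul_right_cancel₀ hApos.ne'
        linear_combination hSA - T * hμB
      have hsplit : (∑ ω, if X ω = x then
          p ω * (νhat (π x) x
            + (Y ω - νhat (K ω) x) * (if K ω = π x then (1:ℝ) else 0) / μ (K ω) x) else 0)
          = νhat (π x) x * A
            + (S - νhat (π x) x * B) / μ (π x) x := by
        have step : ∀ ω, (if X ω = x then
            p ω * (νhat (π x) x
              + (Y ω - νhat (K ω) x) * (if K ω = π x then (1:ℝ) else 0) / μ (K ω) x) else 0)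
            = (if X ω = x then νhat (π x) x * p ω else 0)
              + (if K ω = π x ∧ X ω = x then
                  (p ω * Ypot (π x) ω - νhat (π x) x * p ω) / μ (π x) x else 0) := by
          intro ω
          by_cases hx : X ω = x
          · by_cases hk : K ω = π x
            · simp only [hx, hk, hcons ω, eq_self_iff_true, if_true, and_self, true_and, and_true]
              ring
            · simp only [hx, hk, eq_self_iff_true, if_true, and_true, if_false, false_and]
              ring
          · simp [hx]
        rw [Finset.sum_congr rfl (fun ω _ => step ω), Finset.sum_add_distrib]
        congr 1
        · rw [hAdef, Prb, Finset.mul_sum]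
          apply Finset.sum_congr rfl
          intro ω _
          split_ifs <;> simp
        · rw [hSdef, hBdef, Prb, Finset.mul_sum, ← Finset.sum_sub_distrib, Finset.sum_div]
          apply Finset.sum_congr rfl
          intro ω _
          by_cases h : K ω = π x ∧ X ω = x <;> simp [h]
      rw [hsplit, hST, ← hμB]
      field_simp
      ring
  calc ExV p (fun ω => νhat (π (X ω)) (X ω)
        + (Y ω - νhat (K ω) (X ω)) * (if K ω = π (X ω) then (1:ℝ) else 0) / μ (K ω) (X ω))
      = ∑ x, ∑ ω, if X ω = x then
          p ω * (νhat (π x) x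
            + (Y ω - νhat (K ω) x) * (if K ω = π x then (1:ℝ) else 0) / μ (K ω) x) else 0 := by
        rw [ExV, swap]
        apply Finset.sum_congr rfl
        intro x _
        apply Finset.sum_congr rfl
        intro ω _
        by_cases h : X ω = x <;> simp [h]
    _ = ∑ x, ∑ ω, if X ω = x then p ω * Ypot (π x) ω else 0 :=
        Finset.sum_congr rfl (fun x _ => key x)
    _ = ExV p (fun ω => Ypot (π (X ω)) ω) := by
        rw [ExV, swap (fun ω => p ω * Ypot (π (X ω)) ω)]
        apply Finset.sum_congr rfl
        intro x _
        apply Finset.sum_congr rfl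
        intro ω _
        by_cases h : X ω = x <;> simp [h]
end

section
/- Let X, K, Y, potential outcomes Y(k) satisfy consistency Y = Y(K) and conditional exchangeability Y(k) ⟂ K | X, with X, 𝒦 finite. Let ν_k(x) = E[Y(k) | X = x] be the true outcome regression and let μ̂ : 𝒦 × 𝒳 → ℝ be an arbitrary function with μ̂(k, x) ≠ 0 everywhere. Then for any policy π : 𝒳 → 𝒦, E[ ν_{π(X)}(X) + (Y − ν_K(X)) · 1{K = π(X)} / μ̂(K, X) ] = E[ Y(π(X)) ]. -/
open Classical in
/-- Doubly robust identity with the true outcome regression: for any propensity model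
`μ̂` that never vanishes, `E[ν_{π(X)}(X) + (Y − ν_K(X)) 𝟙{K = π(X)} / μ̂(K, X)] = E[Y(π(X))]`,
where `ν_k(x) = E[Y(k) | X = x]`. -/
theorem doubly_robust_true_regression {Ω 𝒳 𝒦 : Type*} [Fintype Ω] [Fintype 𝒳] [Fintype 𝒦]
    (p : Ω → ℝ) (hp : ∀ ω, 0 ≤ p ω) (hp1 : ∑ ω, p ω = 1)
    (X : Ω → 𝒳) (K : Ω → 𝒦) (Ypot : 𝒦 → Ω → ℝ) (Y : Ω → ℝ)
    (hcons : ∀ ω, Y ω = Ypot (K ω) ω)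
    (hexch : ∀ (k k' : 𝒦) (x : 𝒳) (t : ℝ),
      Prb p (fun ω => Ypot k ω = t ∧ K ω = k' ∧ X ω = x) * Prb p (fun ω => X ω = x)
        = Prb p (fun ω => Ypot k ω = t ∧ X ω = x) * Prb p (fun ω => K ω = k' ∧ X ω = x))
    (ν : 𝒦 → 𝒳 → ℝ)
    (hν : ∀ (k : 𝒦) (x : 𝒳), 0 < Prb p (fun ω => X ω = x) →
      ν k x = CExp p (fun ω => Ypot k ω) (fun ω => X ω = x))
    (μhat : 𝒦 → 𝒳 → ℝ) (hμhat : ∀ (k : 𝒦) (x : 𝒳), μhat k x ≠ 0)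
    (π : 𝒳 → 𝒦) :
    ExV p (fun ω => ν (π (X ω)) (X ω)
        + (Y ω - ν (K ω) (X ω)) * (if K ω = π (X ω) then (1:ℝ) else 0) / μhat (K ω) (X ω))
      = ExV p (fun ω => Ypot (π (X ω)) ω) := by
  classical
  -- abbreviations
  set N : 𝒳 → ℝ := fun x => Prb p (fun ω => X ω = x) with hNdef
  set M : 𝒳 → ℝ := fun x => Prb p (fun ω => K ω = π x ∧ X ω = x) with hMdef
  set T : 𝒦 → 𝒳 → ℝ := fun k x => ∑ ω, if X ω = x then p ω * Ypot k ω else 0 with hTdef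
  set S : 𝒦 → 𝒳 → ℝ := fun k x => ∑ ω, if K ω = π x ∧ X ω = x then p ω * Ypot k ω else 0
    with hSdef
  have hNval : ∀ x, N x = ∑ ω, if X ω = x then p ω else 0 := by
    intro x; rw [hNdef]; rfl
  have hMval : ∀ x, M x = ∑ ω, if K ω = π x ∧ X ω = x then p ω else 0 := by
    intro x
    simp only [hMdef, Prb]
    exact Finset.sum_congr rfl fun ω _ => by split_ifs <;> rfl
  have hNnonneg : ∀ x, 0 ≤ N x := by
    intro x; rw [hNval]
    exact Finset.sum_nonneg fun ω _ => by split_ifs with h; exacts [hp ω, le_refl 0]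
  have hzero : ∀ x, N x = 0 → ∀ ω, X ω = x → p ω = 0 := by
    intro x hx ω hω
    rw [hNval] at hx
    have := (Finset.sum_eq_zero_iff_of_nonneg
      (fun ω _ => by split_ifs with h; exacts [hp ω, le_refl 0])).mp hx ω (Finset.mem_univ ω)
    simpa [hω] using this
  -- conditional independence in expectation form
  have key : ∀ k x, S k x * N x = T k x * M x := by
    intro k x
    set I : Finset ℝ := Finset.image (fun ω => Ypot k ω) Finset.univ with hIdef
    have hmem : ∀ ω, Ypot k ω ∈ I := fun ω => Finset.mem_image_of_mem _ (Finset.mem_univ ω)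
    have h1 : S k x = ∑ t ∈ I, t * Prb p (fun ω => Ypot k ω = t ∧ K ω = π x ∧ X ω = x) := by
      rw [hSdef]
      simp only [Prb, Finset.mul_sum]
      rw [Finset.sum_comm]
      refine Finset.sum_congr rfl fun ω _ => ?_
      by_cases hc : K ω = π x ∧ X ω = x
      · simp only [hc, and_true, if_pos, mul_ite, mul_zero]
        rw [Finset.sum_ite_eq]
        simp [hmem ω, mul_comm]
      · simp [hc]
    have h2 : T k x = ∑ t ∈ I, t * Prb p (fun ω => Ypot k ω = t ∧ X ω = x) := by
      rw [hTdef]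
      simp only [Prb, Finset.mul_sum]
      rw [Finset.sum_comm]
      refine Finset.sum_congr rfl fun ω _ => ?_
      by_cases hc : X ω = x
      · simp only [hc, and_true, if_pos, mul_ite, mul_zero]
        rw [Finset.sum_ite_eq]
        simp [hmem ω, mul_comm]
      · simp [hc]
    rw [h1, h2, Finset.sum_mul, Finset.sum_mul]
    refine Finset.sum_congr rfl fun t _ => ?_
    rw [mul_assoc, mul_assoc, hexch k (π x) x t]
  -- ν times N equals T
  have hνT : ∀ k x, ν k x * N x = T k x := by
    intro k x
    by_cases h : 0 < N x
    · have hne : N x ≠ 0 := ne_of_gt h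
      rw [hν k x h, CExp]
      rw [show (Prb p fun ω => X ω = x) = N x from rfl]
      rw [div_mul_cancel₀ _ hne]
    · have h0 : N x = 0 := le_antisymm (not_lt.mp h) (hNnonneg x)
      rw [h0, mul_zero, hTdef]
      symm
      refine Finset.sum_eq_zero fun ω _ => ?_
      split_ifs with hx
      · rw [hzero x h0 ω hx, zero_mul]
      · rfl
  -- augmentation identity
  have hSM : ∀ k x, S k x = ν k x * M x := by
    intro k x
    by_cases h : 0 < N x
    · have hne : N x ≠ 0 := ne_of_gt h
      have h1 := key k x
      rw [← hνT k x] at h1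
      apply mul_right_cancel₀ hne
      rw [h1]; ring
    · have h0 : N x = 0 := le_antisymm (not_lt.mp h) (hNnonneg x)
      have hMz : M x = 0 := by
        rw [hMval]
        refine Finset.sum_eq_zero fun ω _ => ?_
        split_ifs with hc
        · exact hzero x h0 ω hc.2
        · rfl
      have hSz : S k x = 0 := by
        rw [hSdef]
        refine Finset.sum_eq_zero fun ω _ => ?_
        split_ifs with hc
        · rw [hzero x h0 ω hc.2, zero_mul]
        · rfl
      rw [hSz, hMz, mul_zero]
  -- split sums by fibers of X
  have hsplit : ∀ f : Ω → ℝ, ∑ ω, f ω = ∑ x, ∑ ω, if X ω = x then f ω else 0 := by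
    intro f
    rw [Finset.sum_comm]
    refine Finset.sum_congr rfl fun ω _ => ?_
    rw [Finset.sum_ite_eq]
    simp
  simp only [ExV]
  simp_rw [mul_add]
  rw [Finset.sum_add_distrib]
  have t1 : ∑ ω, p ω * ν (π (X ω)) (X ω) = ∑ x, T (π x) x := by
    rw [hsplit]
    refine Finset.sum_congr rfl fun x _ => ?_
    rw [← hνT (π x) x, hNval, Finset.mul_sum]
    refine Finset.sum_congr rfl fun ω _ => ?_
    split_ifs with hx
    · rw [hx]; ring
    · simp
  have t2 : ∑ ω, p ω * ((Y ω - ν (K ω) (X ω)) * (if K ω = π (X ω) then (1:ℝ) else 0)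
      / μhat (K ω) (X ω)) = 0 := by
    rw [hsplit]
    refine Finset.sum_eq_zero fun x _ => ?_
    have step : ∑ ω, (if X ω = x then p ω * ((Y ω - ν (K ω) (X ω))
          * (if K ω = π (X ω) then (1:ℝ) else 0) / μhat (K ω) (X ω)) else 0)
        = (S (π x) x - ν (π x) x * M x) / μhat (π x) x := by
      rw [hSdef, hMval, Finset.mul_sum, ← Finset.sum_sub_distrib, Finset.sum_div]
      refine Finset.sum_congr rfl fun ω _ => ?_
      by_cases hx : X ω = x
      · by_cases hk : K ω = π x
        · have hY : Y ω = Ypot (π x) ω := by rw [hcons ω, hk]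
          simp only [hx, hk, if_pos, and_self, hY]
          field_simp
        · have hk' : ¬ (K ω = π (X ω)) := by rw [hx]; exact hk
          simp [hx, hk, hk']
      · have hc : ¬ (K ω = π x ∧ X ω = x) := fun h => hx h.2
        simp [hx, hc]
    rw [step, hSM (π x) x, sub_self, zero_div]
  rw [t1, t2, add_zero, hsplit (fun ω => p ω * Ypot (π (X ω)) ω)]
  refine Finset.sum_congr rfl fun x _ => ?_
  rw [hTdef]
  refine Finset.sum_congr rfl fun ω _ => ?_
  split_ifs with hx
  · rw [hx]
  · rfl
end

section
/- There exists a joint distribution of binary random variables X¹, X², treatment K ∈ {0,1}, and potential outcomes Y(0), Y(1) with conditional exchangeability and positivity such that: (i) the policy π₁ branching on X¹ (π₁(x)=x¹) satisfies E[Y(π₁(X))] > E[Y(π₂(X))] for every policy π₂ depending only on X²; but (ii) there exists a policy π₂ depending only on X² with Σ_{x²} P(X² = x²) · E[Y | K = π₂(x²), X² = x²] > Σ_{x¹} P(X¹ = x¹) · E[Y | K = π₁(x¹), X¹ = x¹]. Specifically, take X¹, X² independent Bernoulli(1/2), P(K=0|X¹=0)=0.9, P(K=0|X¹=1)=0.1,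 E[Y(0)|X¹=0]=1, E[Y(1)|X¹=0]=0.8, E[Y(0)|X¹=1]=0, E[Y(1)|X¹=1]=0.2. -/
/-- Table of mean potential outcomes of Example 1: `exMean k x¹ = E[Y(k) | X¹ = x¹]`. -/
noncomputable def exMean : Fin 2 → Fin 2 → ℝ := fun k x1 =>
  if k = 0 then (if x1 = 0 then 1 else 0) else (if x1 = 0 then 0.8 else 0.2)


/-- Auxiliary: probability weights for Example 1, indexed by `4*x¹ + 2*x² + k`. -/
noncomputable def pv : Fin 8 → ℝ := ![0.225, 0.025, 0.225, 0.025, 0.025, 0.225, 0.025, 0.225]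

def X1v : Fin 8 → Fin 2 := ![0, 0, 0, 0, 1, 1, 1, 1]
def X2v : Fin 8 → Fin 2 := ![0, 0, 1, 1, 0, 0, 1, 1]
def Kv : Fin 8 → Fin 2 := ![0, 1, 0, 1, 0, 1, 0, 1]

noncomputable def Yv : Fin 2 → Fin 8 → ℝ := fun k ω => exMean k (X1v ω)

@[simp] lemma pv_0 : pv 0 = 0.225 := rfl
@[simp] lemma X1v_0 : X1v 0 = 0 := rfl
@[simp] lemma X2v_0 : X2v 0 = 0 := rfl
@[simp] lemma Kv_0 : Kv 0 = 0 := rfl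
@[simp] lemma pv_1 : pv 1 = 0.025 := rfl
@[simp] lemma X1v_1 : X1v 1 = 0 := rfl
@[simp] lemma X2v_1 : X2v 1 = 0 := rfl
@[simp] lemma Kv_1 : Kv 1 = 1 := rfl
@[simp] lemma pv_2 : pv 2 = 0.225 := rfl
@[simp] lemma X1v_2 : X1v 2 = 0 := rfl
@[simp] lemma X2v_2 : X2v 2 = 1 := rfl
@[simp] lemma Kv_2 : Kv 2 = 0 := rfl
@[simp] lemma pv_3 : pv 3 = 0.025 := rfl
@[simp] lemma X1v_3 : X1v 3 = 0 := rfl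
@[simp] lemma X2v_3 : X2v 3 = 1 := rfl
@[simp] lemma Kv_3 : Kv 3 = 1 := rfl
@[simp] lemma pv_4 : pv 4 = 0.025 := rfl
@[simp] lemma X1v_4 : X1v 4 = 1 := rfl
@[simp] lemma X2v_4 : X2v 4 = 0 := rfl
@[simp] lemma Kv_4 : Kv 4 = 0 := rfl
@[simp] lemma pv_5 : pv 5 = 0.225 := rfl
@[simp] lemma X1v_5 : X1v 5 = 1 := rfl
@[simp] lemma X2v_5 : X2v 5 = 0 := rfl
@[simp] lemma Kv_5 : Kv 5 = 1 := rfl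
@[simp] lemma pv_6 : pv 6 = 0.025 := rfl
@[simp] lemma X1v_6 : X1v 6 = 1 := rfl
@[simp] lemma X2v_6 : X2v 6 = 1 := rfl
@[simp] lemma Kv_6 : Kv 6 = 0 := rfl
@[simp] lemma pv_7 : pv 7 = 0.225 := rfl
@[simp] lemma X1v_7 : X1v 7 = 1 := rfl
@[simp] lemma X2v_7 : X2v 7 = 1 := rfl
@[simp] lemma Kv_7 : Kv 7 = 1 := rfl

lemma fin2 (i : Fin 2) : i = 0 ∨ i = 1 := by omega

lemma if_and_eq {A c B : Prop} [Decidable (A ∧ B)] [Decidable c] [Decidable B] (p : ℝ)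
    (h : B → (A ↔ c)) :
    (if A ∧ B then p else 0) = (if c then 1 else 0) * (if B then p else 0) := by
  by_cases hB : B
  · rw [if_pos hB]
    by_cases hc : c
    · rw [if_pos ⟨(h hB).mpr hc, hB⟩, if_pos hc, one_mul]
    · rw [if_neg (fun hab => hc ((h hB).mp hab.1)), if_neg hc, zero_mul]
  · rw [if_neg hB, if_neg (fun hab => hB hab.2), mul_zero]

open Classical in
/-- Example 1: there is a joint distribution (with conditional exchangeability and
positivity) for which the policy branching on `X¹` is strictly better than every policy
branching on `X²` in true value, yet some `X²`-branching policy has a strictly larger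
K-PT objective (within-leaf average observed outcome). -/
theorem example1_exists :
    ∃ (n : ℕ) (p : Fin n → ℝ) (X1 X2 K : Fin n → Fin 2) (Ypot : Fin 2 → Fin n → ℝ),
      (∀ ω, 0 ≤ p ω) ∧ (∑ ω, p ω = 1) ∧
      -- X¹, X² independent Bernoulli(1/2)
      (∀ a b : Fin 2, Prb p (fun ω => X1 ω = a ∧ X2 ω = b) = 1 / 4) ∧
      -- P(K = 0 | X¹ = 0) = 0.9 and P(K = 0 | X¹ = 1) = 0.1
      Prb p (fun ω => K ω = 0 ∧ X1 ω = 0) = 0.9 * Prb p (fun ω => X1 ω = 0) ∧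
      Prb p (fun ω => K ω = 0 ∧ X1 ω = 1) = 0.1 * Prb p (fun ω => X1 ω = 1) ∧
      -- mean potential outcomes given X¹ follow the table of Example 1
      (∀ k x1 : Fin 2, (∑ ω, if X1 ω = x1 then p ω * Ypot k ω else 0)
        = exMean k x1 * Prb p (fun ω => X1 ω = x1)) ∧
      -- conditional exchangeability given X = (X¹, X²)
      (∀ (k k' : Fin 2) (x : Fin 2 × Fin 2) (t : ℝ),
        Prb p (fun ω => Ypot k ω = t ∧ K ω = k' ∧ (X1 ω, X2 ω) = x)
            * Prb p (fun ω => (X1 ω, X2 ω) = x)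
          = Prb p (fun ω => Ypot k ω = t ∧ (X1 ω, X2 ω) = x)
            * Prb p (fun ω => K ω = k' ∧ (X1 ω, X2 ω) = x)) ∧
      -- positivity
      (∀ (k : Fin 2) (x : Fin 2 × Fin 2), 0 < Prb p (fun ω => (X1 ω, X2 ω) = x) →
        0 < Prb p (fun ω => K ω = k ∧ (X1 ω, X2 ω) = x)) ∧
      -- (i) branching on X¹ beats every policy depending only on X²
      (∀ g : Fin 2 → Fin 2,
        ExV p (fun ω => Ypot (g (X2 ω)) ω) < ExV p (fun ω => Ypot (X1 ω) ω)) ∧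
      -- (ii) yet some X²-policy has a strictly larger within-leaf observed-outcome objective
      (∃ g : Fin 2 → Fin 2,
        (∑ x1 : Fin 2, Prb p (fun ω => X1 ω = x1)
            * CExp p (fun ω => Ypot (K ω) ω) (fun ω => K ω = x1 ∧ X1 ω = x1))
          < ∑ x2 : Fin 2, Prb p (fun ω => X2 ω = x2)
            * CExp p (fun ω => Ypot (K ω) ω) (fun ω => K ω = g x2 ∧ X2 ω = x2)) := by
  refine ⟨8, pv, X1v, X2v, Kv, Yv, ?_, ?_, ?_, ?_, ?_, ?_, ?_, ?_, ?_, ?_⟩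
  · intro ω; fin_cases ω <;> norm_num [pv]
  · norm_num [Fin.sum_univ_eight]
  · intro a b
    rcases fin2 a with ha | ha <;> rcases fin2 b with hb | hb <;>
      subst ha <;> subst hb <;>
      norm_num [Prb, Fin.sum_univ_eight]
  · norm_num [Prb, Fin.sum_univ_eight]
  · norm_num [Prb, Fin.sum_univ_eight]
  · intro k x1
    rcases fin2 k with hk | hk <;> rcases fin2 x1 with hx | hx <;>
      subst hk <;> subst hx <;>
      norm_num [Prb, Fin.sum_univ_eight, Yv, exMean]
  · intro k k' x t
    have hrw : ∀ (B : Fin 8 → Prop) [DecidablePred B], (∀ ω, B ω → X1v ω = x.1) →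
        Prb pv (fun ω => Yv k ω = t ∧ B ω)
          = (if exMean k x.1 = t then 1 else 0) * Prb pv B := by
      intro B _ hB
      unfold Prb
      rw [Finset.mul_sum]
      refine Finset.sum_congr rfl fun ω _ => ?_
      exact @if_and_eq (Yv k ω = t) (exMean k x.1 = t) (B ω) (propDecidable _)
        (propDecidable _) (propDecidable _) (pv ω)
        (fun hb => by rw [show Yv k ω = exMean k x.1 by rw [Yv, hB ω hb]])
    rw [hrw (fun ω => Kv ω = k' ∧ (X1v ω, X2v ω) = x)
        (fun ω h => by rw [← h.2]),
      hrw (fun ω => (X1v ω, X2v ω) = x) (fun ω h => by rw [← h])]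
    ring
  · intro k x _
    rcases fin2 k with hk | hk <;> rcases fin2 x.1 with h1 | h1 <;>
      rcases fin2 x.2 with h2 | h2 <;>
      subst hk <;>
      rw [show x = (x.1, x.2) from rfl, h1, h2] <;>
      norm_num [Prb, Fin.sum_univ_eight, Prod.ext_iff]
  · intro g
    rcases fin2 (g 0) with h0 | h0 <;> rcases fin2 (g 1) with h1 | h1 <;>
      norm_num [ExV, Fin.sum_univ_eight, Yv, exMean, h0, h1]
  · refine ⟨fun _ => 0, ?_⟩
    norm_num [Prb, CExp, Fin.sum_univ_two, Fin.sum_univ_eight, Yv, exMean]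
end
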